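/- Let c₂ ≠ 0, set c₁ = c₂²/4 (so that Δ = c₂² − 4c₁ = 0), let f₀, e₀ > 0, and define the reduced indicatrix χ̄(π) = (1/12)·(c₂·(π+1) + 2)². Let I ⊆ (−1,∞) be an open interval on which c₂·(π+1) + 2 ≠ 0. Then the functions f(π) = f₀·exp( −12/(c₂·(c₂(π+1)+2)) ) and e(π) = e₀·(c₂(π+1)+2)³·(π+1)^(−3)·exp( −6(c₂+2)/(c₂·(c₂(π+1)+2)) ) are differentiable on I and satisfy the generating ODEs f′(π)·χ̄(π) = f(π) and e′(π)·χ̄(π)·(π+1) = π·e(π) for all π ∈ I. -/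
import Mathlib


/-- Class 3 of Proposition 5 (`Δ = c₂² − 4c₁ = 0`, `c₁ = c₂²/4 ≠ 0`, reduced indicatrix
`χ̄(π) = (c₂(π+1)+2)²/12`): the generating functions satisfy the generating ODEs. -/
theorem stmt_6
    (c₂ : ℝ) (hc₂ : c₂ ≠ 0)
    (c₁ : ℝ) (hc₁ : c₁ = c₂^2 / 4)
    (f₀ e₀ : ℝ) (hf₀ : 0 < f₀) (he₀ : 0 < e₀)
    (I : Set ℝ) (hIint : ∃ u v : ℝ, I = Set.Ioo u v)
    (hIsub : I ⊆ Set.Ioi (-1 : ℝ))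
    (hIne : ∀ π ∈ I, c₂ * (π + 1) + 2 ≠ 0)
    (χbar f e : ℝ → ℝ)
    (hχbar : ∀ π : ℝ, χbar π = (1/12) * (c₂ * (π + 1) + 2)^2)
    (hfdef : ∀ π : ℝ, f π = f₀ * Real.exp (-12 / (c₂ * (c₂ * (π + 1) + 2))))
    (hedef : ∀ π : ℝ, e π =
      e₀ * (c₂ * (π + 1) + 2)^3 * (π + 1) ^ (-3 : ℝ) *
        Real.exp (-(6 * (c₂ + 2)) / (c₂ * (c₂ * (π + 1) + 2)))) :
    ∀ π ∈ I,
      DifferentiableAt ℝ f π ∧ DifferentiableAt ℝ e π ∧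
      deriv f π * χbar π = f π ∧
      deriv e π * χbar π * (π + 1) = π * e π := by
  intro π hπ
  have hs : (0:ℝ) < π + 1 := by
    have := hIsub hπ; simp only [Set.mem_Ioi] at this; linarith
  have hs0 : π + 1 ≠ 0 := ne_of_gt hs
  have hD : c₂ * (π + 1) + 2 ≠ 0 := hIne π hπ
  have hcD : c₂ * (c₂ * (π + 1) + 2) ≠ 0 := mul_ne_zero hc₂ hD
  have hfun_f : f = fun x => f₀ * Real.exp (-12 / (c₂ * (c₂ * (x + 1) + 2))) := funext hfdef
  have hfun_e : e = fun x => e₀ * (c₂ * (x + 1) + 2)^3 * (x + 1) ^ (-3 : ℝ) *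
      Real.exp (-(6 * (c₂ + 2)) / (c₂ * (c₂ * (x + 1) + 2))) := funext hedef
  -- inner linear functions
  have hlin : HasDerivAt (fun x : ℝ => c₂ * (x + 1) + 2) c₂ π := by
    simpa using (((hasDerivAt_id π).add_const 1).const_mul c₂).add_const 2
  have hlin2 : HasDerivAt (fun x : ℝ => c₂ * (c₂ * (x + 1) + 2)) (c₂ * c₂) π :=
    hlin.const_mul c₂
  -- f
  have hf' : HasDerivAt f
      (f₀ * (Real.exp (-12 / (c₂ * (c₂ * (π + 1) + 2))) *
        ((0 * (c₂ * (c₂ * (π + 1) + 2)) - (-12) * (c₂ * c₂)) / (c₂ * (c₂ * (π + 1) + 2))^2))) π := by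
    rw [hfun_f]
    exact ((((hasDerivAt_const π (-12)).div hlin2 hcD).exp).const_mul f₀)
  -- e
  have he1 : HasDerivAt (fun x : ℝ => e₀ * (c₂ * (x + 1) + 2)^3)
      (e₀ * (3 * (c₂ * (π + 1) + 2)^2 * c₂)) π := by
    simpa using (hlin.pow 3).const_mul e₀
  have he2 : HasDerivAt (fun x : ℝ => (x + 1) ^ (-3 : ℝ))
      ((-3 : ℝ) * (π + 1) ^ ((-3 : ℝ) - 1)) π := by
    simpa using ((hasDerivAt_id π).add_const 1).rpow_const (p := -3) (Or.inl hs0)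
  have he3 : HasDerivAt (fun x : ℝ => Real.exp (-(6 * (c₂ + 2)) / (c₂ * (c₂ * (x + 1) + 2))))
      (Real.exp (-(6 * (c₂ + 2)) / (c₂ * (c₂ * (π + 1) + 2))) *
        ((0 * (c₂ * (c₂ * (π + 1) + 2)) - (-(6 * (c₂ + 2))) * (c₂ * c₂)) / (c₂ * (c₂ * (π + 1) + 2))^2)) π :=
    ((hasDerivAt_const π (-(6 * (c₂ + 2)))).div hlin2 hcD).exp
  have he' : HasDerivAt e
      (((e₀ * (3 * (c₂ * (π + 1) + 2)^2 * c₂)) * ((π + 1) ^ (-3 : ℝ)) +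
        (e₀ * (c₂ * (π + 1) + 2)^3) * ((-3 : ℝ) * (π + 1) ^ ((-3 : ℝ) - 1))) *
        Real.exp (-(6 * (c₂ + 2)) / (c₂ * (c₂ * (π + 1) + 2))) +
        (e₀ * (c₂ * (π + 1) + 2)^3 * (π + 1) ^ (-3 : ℝ)) *
        (Real.exp (-(6 * (c₂ + 2)) / (c₂ * (c₂ * (π + 1) + 2))) *
        ((0 * (c₂ * (c₂ * (π + 1) + 2)) - (-(6 * (c₂ + 2))) * (c₂ * c₂)) / (c₂ * (c₂ * (π + 1) + 2))^2))) π := by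
    rw [hfun_e]
    exact (he1.mul he2).mul he3
  -- rpow rewrites
  have hr3 : (π + 1) ^ (-3 : ℝ) = ((π + 1)^3)⁻¹ := by
    rw [show (-3 : ℝ) = -(3:ℕ) by norm_num, Real.rpow_neg hs.le, Real.rpow_natCast]
  have hr4 : (π + 1) ^ ((-3 : ℝ) - 1) = ((π + 1)^4)⁻¹ := by
    rw [show ((-3 : ℝ) - 1) = -(4:ℕ) by norm_num, Real.rpow_neg hs.le, Real.rpow_natCast]
  refine ⟨hf'.differentiableAt, he'.differentiableAt, ?_, ?_⟩
  · rw [hf'.deriv, hχbar, hfdef]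
    field_simp
    ring
  · rw [he'.deriv, hχbar, hedef, hr3, hr4]
    have hs3 : (π+1)^3 ≠ 0 := pow_ne_zero _ hs0
    have hs4 : (π+1)^4 ≠ 0 := pow_ne_zero _ hs0
    field_simp
    ring
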